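/- Let p be an odd prime, let n ≥ p + 4 be an integer, let α ∈ {0,1}, and let G = 2^α.S_n with projection π : G → S_n and central element z of order 2. Let g ∈ G be an element such that π(g) has cycle type (p, 2, 2, 1^{n−p−4}). Then every irreducible complex character χ of G with χ(z) ≠ χ(1) satisfies χ(g) = 0. -/

import Mathlib

/-! Double covers `2^α.S_n` of the symmetric groups, via the presentation with
generators `z, t_1, …, t_{n-1}` and relations `z² = 1`, `t_j² = z^α`,
`(t_j t_{j+1})³ = z^α`, `[z, t_j] = 1`, and `t_j t_k = z t_k t_j` for `|j - k| > 1`.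
Here `α = 0` gives `2^+.S_n` and `α = 1` gives `2^-.S_n`. -/

namespace DoubleCover

/-- Generators: `Sum.inl ()` is `z`; `Sum.inr j` is `t_{j+1}` for `j : Fin (n - 1)`. -/
abbrev Gen (n : ℕ) := Unit ⊕ Fin (n - 1)

/-- The word `z` in the free group on the generators. -/
def zw (n : ℕ) : FreeGroup (Gen n) := FreeGroup.of (Sum.inl ())

/-- The word `t_{j+1}` in the free group on the generators. -/
def tw (n : ℕ) (j : Fin (n - 1)) : FreeGroup (Gen n) := FreeGroup.of (Sum.inr j)

/-- The relations of the presentation of `2^α.S_n`. -/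
def rels (n α : ℕ) : Set (FreeGroup (Gen n)) :=
  {r | r = zw n ^ 2
    ∨ (∃ j, r = tw n j ^ 2 * (zw n ^ α)⁻¹)
    ∨ (∃ j k : Fin (n - 1), (j : ℕ) + 1 = (k : ℕ) ∧
        r = (tw n j * tw n k) ^ 3 * (zw n ^ α)⁻¹)
    ∨ (∃ j, r = zw n * tw n j * (zw n)⁻¹ * (tw n j)⁻¹)
    ∨ (∃ j k : Fin (n - 1), 1 < Nat.dist (j : ℕ) (k : ℕ) ∧
        r = tw n j * tw n k * (zw n * tw n k * tw n j)⁻¹)}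

/-- The double cover `2^α.S_n` of the symmetric group `S_n`. -/
abbrev Cover (n α : ℕ) := PresentedGroup (rels n α)

/-- The central element `z` of `2^α.S_n`. -/
def z (n α : ℕ) : Cover n α := PresentedGroup.of (Sum.inl ())

/-- The generator `t_{j+1}` of `2^α.S_n`, lifting the transposition `(j+1, j+2)`. -/
def t (n α : ℕ) (j : Fin (n - 1)) : Cover n α := PresentedGroup.of (Sum.inr j)

end DoubleCover

namespace DoubleCover

variable {n α : ℕ}


/-- The quotient map. -/
def mk (n α : ℕ) : FreeGroup (Gen n) →* Cover n α := QuotientGroup.mk' _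

lemma rel_one {r : FreeGroup (Gen n)} (hr : r ∈ rels n α) : mk n α r = 1 :=
  (QuotientGroup.eq_one_iff r).mpr (Subgroup.subset_normalClosure hr)

lemma mk_zw : mk n α (zw n) = z n α := rfl
lemma mk_tw (j : Fin (n-1)) : mk n α (tw n j) = t n α j := rfl

lemma z_mul_z : z n α * z n α = 1 := by
  have := rel_one (α := α) (Or.inl rfl : zw n ^ 2 ∈ rels n α)
  rw [map_pow, mk_zw, pow_two] at this
  exact this

lemma z_comm_t (j : Fin (n-1)) : z n α * t n α j = t n α j * z n α := by
  have := rel_one (α := α) (Or.inr (Or.inr (Or.inr (Or.inl ⟨j, rfl⟩))) :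
    zw n * tw n j * (zw n)⁻¹ * (tw n j)⁻¹ ∈ rels n α)
  simp only [map_mul, map_inv, mk_zw, mk_tw] at this
  have h2 : z n α * t n α j * (z n α)⁻¹ * (t n α j)⁻¹ = 1 := by
    simpa using this
  rw [mul_inv_eq_one] at h2
  rw [mul_inv_eq_iff_eq_mul] at h2
  exact h2

lemma t_anticomm {j k : Fin (n-1)} (h : 1 < Nat.dist (j : ℕ) (k : ℕ)) :
    t n α j * t n α k = z n α * (t n α k * t n α j) := by
  have := rel_one (α := α) (Or.inr (Or.inr (Or.inr (Or.inr ⟨j, k, h, rfl⟩))) :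
    tw n j * tw n k * (zw n * tw n k * tw n j)⁻¹ ∈ rels n α)
  simp only [map_mul, map_inv, mk_zw, mk_tw] at this
  rw [mul_inv_eq_one] at this
  rw [this, mul_assoc]

lemma z_comm (x : Cover n α) : z n α * x = x * z n α := by
  have key : ∀ w : FreeGroup (Gen n), Commute (z n α) (mk n α w) := by
    intro w
    induction w using FreeGroup.induction_on with
    | C1 => simp [Commute.one_right]
    | of x =>
      rcases x with u | j
      · exact Commute.refl _
      · exact z_comm_t j
    | inv_of x ih => simpa [map_inv] using ih.inv_right
    | mul x y ihx ihy => simpa [map_mul] using ihx.mul_right ihy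
  obtain ⟨w, rfl⟩ := QuotientGroup.mk'_surjective (Subgroup.normalClosure (rels n α)) x
  exact key w


lemma z_sq : (z n α) ^ 2 = 1 := by rw [pow_two]; exact z_mul_z

lemma z_pow_odd {p : ℕ} (hpodd : Odd p) : (z n α) ^ p = z n α := by
  obtain ⟨k, hk⟩ := hpodd
  subst hk
  rw [pow_add, pow_mul, z_sq, one_pow, one_mul, pow_one]

lemma mul_list_prod {G : Type*} [Group G] (zc tc : G) (hz : ∀ a : G, zc * a = a * zc)
    (l : List G) (h : ∀ a ∈ l, tc * a = zc * (a * tc)) :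
    tc * l.prod = zc ^ l.length * (l.prod * tc) := by
  induction l with
  | nil => simp
  | cons a l ih =>
    have ih' := ih (fun b hb => h b (List.mem_cons_of_mem _ hb))
    simp only [List.prod_cons, List.length_cons]
    rw [← mul_assoc, h a List.mem_cons_self, mul_assoc, mul_assoc a tc l.prod, ih']
    rw [show zc * (a * (zc ^ l.length * (l.prod * tc)))
        = (zc * (a * zc ^ l.length)) * (l.prod * tc) by group]
    have hcomm : a * zc ^ l.length = zc ^ l.length * a := by
      induction l.length with
      | zero => simp
      | succ m ihm => rw [pow_succ, ← mul_assoc, ihm, mul_assoc, ← hz a, ← mul_assoc]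
    rw [hcomm]
    rw [show zc * (zc ^ l.length * a) * (l.prod * tc) = zc ^ (l.length + 1) * (a * (l.prod * tc))
        by rw [pow_succ']; group]
    group

lemma conj_zg0 {n α p : ℕ} (hp2 : 2 ≤ p) (hpodd : Odd p) (hn : p + 4 ≤ n) :
    (t n α ⟨p, by omega⟩) *
      ((List.ofFn fun i : Fin (p-1) => t n α (Fin.castLE (by omega) i)).prod
        * t n α ⟨p, by omega⟩ * t n α ⟨p+2, by omega⟩) *
      (t n α ⟨p, by omega⟩)⁻¹ =
    z n α * ((List.ofFn fun i : Fin (p-1) => t n α (Fin.castLE (by omega) i)).prod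
        * t n α ⟨p, by omega⟩ * t n α ⟨p+2, by omega⟩) := by
  set y : Cover n α := t n α ⟨p, by omega⟩ with hy
  set tq : Cover n α := t n α ⟨p+2, by omega⟩ with htq
  set L : List (Cover n α) := List.ofFn fun i : Fin (p-1) => t n α (Fin.castLE (by omega) i)
    with hL
  set C : Cover n α := L.prod with hC
  have step1 : y * C = (z n α) ^ (p-1) * (C * y) := by
    have hlen : L.length = p - 1 := by simp [hL]
    rw [hC, ← hlen]
    refine mul_list_prod _ _ z_comm L ?_
    intro a ha
    rw [hL, List.mem_ofFn] at ha
    obtain ⟨i, rfl⟩ := ha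
    refine t_anticomm ?_
    have hi := i.isLt
    simp only [Fin.coe_castLE]
    unfold Nat.dist
    omega
  have step2 : y * tq = z n α * (tq * y) := by
    refine t_anticomm ?_
    unfold Nat.dist
    simp only []
    omega
  have key : y * (C * y * tq) = z n α * (C * y * tq * y) := by
    calc y * (C * y * tq) = (y * C) * (y * tq) := by group
      _ = ((z n α) ^ (p-1) * (C * y)) * (z n α * (tq * y)) := by rw [step1, step2]
      _ = (z n α) ^ (p-1) * (((C * y) * z n α) * (tq * y)) := by group
      _ = (z n α) ^ (p-1) * ((z n α * (C * y)) * (tq * y)) := by rw [← z_comm]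
      _ = ((z n α) ^ (p-1) * z n α) * ((C * y) * (tq * y)) := by group
      _ = (z n α) ^ p * (C * y * tq * y) := by
          rw [← pow_succ, show p - 1 + 1 = p by omega]; group
      _ = z n α * (C * y * tq * y) := by rw [z_pow_odd hpodd]
  calc y * (C * y * tq) * y⁻¹ = (y * (C * y * tq)) * y⁻¹ := by group
    _ = (z n α * (C * y * tq * y)) * y⁻¹ := by rw [key]
    _ = z n α * (C * y * tq) := by group

end DoubleCover


/-- A subgroup is an elementary abelian 2-subgroup iff every element squares to `1`
(this forces it to be abelian). -/
def IsElemAbelianTwo {G : Type*} [Group G] (E : Subgroup G) : Prop :=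
  ∀ x ∈ E, x ^ 2 = 1

section Aux
open Equiv Equiv.Perm


lemma formPerm_ofFn {β : Type*} [DecidableEq β] (m : ℕ) (f : ℕ → β) :
    (List.ofFn fun i : Fin (m+1) => f i).formPerm
      = (List.ofFn fun i : Fin m => Equiv.swap (f i) (f (i+1))).prod := by
  induction m generalizing f with
  | zero => simp [List.formPerm]
  | succ m ih =>
    have h1 : (List.ofFn fun i : Fin (m+2) => f i)
        = f 0 :: (List.ofFn fun i : Fin (m+1) => f (i+1)) := by
      rw [List.ofFn_succ]
      congr 1
    have h2 : (List.ofFn fun i : Fin (m+1) => f (i+1))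
        = f 1 :: (List.ofFn fun i : Fin m => f (i+2)) := by
      rw [List.ofFn_succ]
      congr 1
    rw [h1, h2, List.formPerm_cons_cons, ← h2, ih (fun k => f (k+1))]
    rw [List.ofFn_succ]
    simp only [List.prod_cons, Fin.val_succ]
    congr 1

lemma cycleType_three {n p : ℕ} (hp3 : 3 ≤ p) (hn : p + 4 ≤ n) (f : ℕ → Fin n)
    (hf : ∀ i j : ℕ, i ≤ p+3 → j ≤ p+3 → f i = f j → i = j) :
    (((List.ofFn fun i : Fin (p-1) => Equiv.swap (f i) (f (i+1))).prod
      * Equiv.swap (f p) (f (p+1))) * Equiv.swap (f (p+2)) (f (p+3))).cycleType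
    = {p, 2, 2} := by
  set L : List (Fin n) := List.ofFn fun i : Fin p => f i with hLdef
  have hform : (List.ofFn fun i : Fin (p-1) => Equiv.swap (f i) (f (i+1))).prod = L.formPerm := by
    rw [hLdef, show p = (p-1)+1 by omega, formPerm_ofFn]
    rfl
  have hnodupL : L.Nodup := by
    rw [hLdef, List.nodup_ofFn]
    intro i j hij
    exact Fin.ext (hf i j (by omega) (by omega) hij)
  have hlenL : L.length = p := by simp [hLdef]
  have hmemL : ∀ x : Fin n, x ∈ L ↔ ∃ i : ℕ, i < p ∧ f i = x := by
    intro x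
    rw [hLdef, List.mem_ofFn]
    constructor
    · rintro ⟨i, rfl⟩; exact ⟨i, i.isLt, rfl⟩
    · rintro ⟨i, hi, rfl⟩; exact ⟨⟨i, hi⟩, rfl⟩
  have hC : L.formPerm.IsCycle := List.isCycle_formPerm hnodupL (by omega)
  have hsupp : L.formPerm.support = L.toFinset :=
    List.support_formPerm_of_nodup L hnodupL (by
      intro x hx
      have := congrArg List.length hx
      simp [hlenL] at this
      omega)
  have hCtype : L.formPerm.cycleType = {p} := by
    rw [hC.cycleType, hsupp, List.toFinset_card_of_nodup hnodupL, hlenL]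
  have hne1 : f p ≠ f (p+1) := fun h => by have := hf p (p+1) (by omega) (by omega) h; omega
  have hne2 : f (p+2) ≠ f (p+3) := fun h => by have := hf _ _ (by omega) (by omega) h; omega
  have hfix : ∀ (a b : ℕ) (x : Fin n), x ≠ f a → x ≠ f b → Equiv.swap (f a) (f b) x = x :=
    fun a b x h1 h2 => Equiv.swap_apply_of_ne_of_ne h1 h2
  have hd1 : Disjoint L.formPerm (Equiv.swap (f p) (f (p+1))) := by
    intro x
    by_cases hx : x ∈ L
    · right
      obtain ⟨i, hi, rfl⟩ := (hmemL x).mp hx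
      exact hfix _ _ _ (fun h => by have := hf i p (by omega) (by omega) h; omega)
        (fun h => by have := hf i (p+1) (by omega) (by omega) h; omega)
    · exact Or.inl (List.formPerm_apply_of_notMem hx)
  have hd2 : Disjoint L.formPerm (Equiv.swap (f (p+2)) (f (p+3))) := by
    intro x
    by_cases hx : x ∈ L
    · right
      obtain ⟨i, hi, rfl⟩ := (hmemL x).mp hx
      exact hfix _ _ _ (fun h => by have := hf i (p+2) (by omega) (by omega) h; omega)
        (fun h => by have := hf i (p+3) (by omega) (by omega) h; omega)
    · exact Or.inl (List.formPerm_apply_of_notMem hx)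
  have hd3 : Disjoint (Equiv.swap (f p) (f (p+1))) (Equiv.swap (f (p+2)) (f (p+3))) := by
    intro x
    by_cases hx : x = f p ∨ x = f (p+1)
    · right
      rcases hx with rfl | rfl
      · exact hfix _ _ _ (fun h => by have := hf p (p+2) (by omega) (by omega) h; omega)
          (fun h => by have := hf p (p+3) (by omega) (by omega) h; omega)
      · exact hfix _ _ _ (fun h => by have := hf (p+1) (p+2) (by omega) (by omega) h; omega)
          (fun h => by have := hf (p+1) (p+3) (by omega) (by omega) h; omega)
    · push_neg at hx
      exact Or.inl (hfix _ _ _ hx.1 hx.2)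
  have hswap1 : (Equiv.swap (f p) (f (p+1))).cycleType = {2} := by
    rw [(isCycle_swap hne1).cycleType, card_support_swap hne1]
  have hswap2 : (Equiv.swap (f (p+2)) (f (p+3))).cycleType = {2} := by
    rw [(isCycle_swap hne2).cycleType, card_support_swap hne2]
  rw [hform]
  rw [Equiv.Perm.Disjoint.cycleType_mul (Equiv.Perm.Disjoint.mul_left hd2 hd3),
    Equiv.Perm.Disjoint.cycleType_mul hd1, hCtype, hswap1, hswap2]
  simp [Multiset.singleton_add, Multiset.cons_add]
end Aux

section SchurAux
open CategoryTheory


theorem char_z_smul {G : Type} [Group G] (z : G) (hzc : ∀ x : G, z*x = x*z) (hz2 : z*z = 1)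
    (V : FDRep ℂ G) (hV : CategoryTheory.Simple V)
    (hfaith : V.character z ≠ V.character 1)
    (g : G) : V.character (z * g) = - V.character g := by
  haveI := hV
  let f : V ⟶ V := { hom := Action.ρ V z
                     comm := fun h => by
                       rw [← CategoryTheory.End.mul_def, ← CategoryTheory.End.mul_def,
                         ← map_mul, ← map_mul, hzc] }
  obtain ⟨c, hc⟩ := CategoryTheory.endomorphism_simple_eq_smul_id ℂ f
  have hρz : V.ρ z = c • LinearMap.id := by
    have := congrArg (fun φ : V ⟶ V => φ.hom.hom.hom) hc
    exact this.symm.trans (by rfl)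
  have hchar1 : V.character 1 = (Module.finrank ℂ V : ℂ) := by simp
  have hcharz : V.character z = c * (Module.finrank ℂ V : ℂ) := by
    simp only [FDRep.character, hρz, map_smul, smul_eq_mul, LinearMap.trace_id]
  have hfr : (Module.finrank ℂ V : ℂ) ≠ 0 := by
    intro h0
    exact hfaith (by rw [hcharz, hchar1, h0, mul_zero])
  have hc1 : c ≠ 1 := fun h1 => hfaith (by rw [hcharz, hchar1, h1, one_mul])
  have hsq : c * c = 1 := by
    have h2 : V.ρ (z * z) = (c * c) • (LinearMap.id : V →ₗ[ℂ] V) := by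
      rw [map_mul, hρz]
      ext v
      simp [mul_smul]
    rw [hz2, map_one] at h2
    have htr := congrArg (LinearMap.trace ℂ V) h2
    rw [LinearMap.trace_one, map_smul, LinearMap.trace_id, smul_eq_mul] at htr
    exact mul_right_cancel₀ hfr (htr.symm.trans (one_mul _).symm)
  have hcneg : c = -1 := by
    have h3 : (c - 1) * (c + 1) = 0 := by ring_nf; linear_combination hsq
    rcases mul_eq_zero.mp h3 with h | h
    · exact absurd (sub_eq_zero.mp h) hc1
    · exact eq_neg_of_add_eq_zero_left h
  have h4 : V.ρ (z * g) = c • V.ρ g := by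
    rw [map_mul, hρz]
    ext v
    simp
  rw [FDRep.character, h4, map_smul, smul_eq_mul, hcneg, neg_one_mul, FDRep.character]
end SchurAux

/-- Let `p` be an odd prime, `n ≥ p + 4`, and `G = 2^α.S_n`. If `g ∈ G`
projects to a permutation of cycle type `(p, 2, 2, 1^{n-p-4})`, then every irreducible
complex character `χ` of `G` which is faithful on the centre (`χ(z) ≠ χ(1)`) vanishes
at `g`. -/
theorem faithful_char_vanishes_cover_Sn
    (p : ℕ) (hp : p.Prime) (hpodd : Odd p)
    (n : ℕ) (hn : p + 4 ≤ n) (α : ℕ) (hα : α = 0 ∨ α = 1)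
    (π : DoubleCover.Cover n α →* Equiv.Perm (Fin n))
    (hπt : ∀ j : Fin (n - 1), π (DoubleCover.t n α j) =
      Equiv.swap (Fin.castLE (by omega) j) (Fin.castLE (by omega) j.succ))
    (hπsurj : Function.Surjective π)
    (hπker : π.ker = Subgroup.zpowers (DoubleCover.z n α))
    (hz : orderOf (DoubleCover.z n α) = 2)
    (g : DoubleCover.Cover n α)
    (hg : (π g).cycleType = {p, 2, 2})
    (V : FDRep ℂ (DoubleCover.Cover n α)) (hV : CategoryTheory.Simple V)
    (hfaith : V.character (DoubleCover.z n α) ≠ V.character 1) :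
    V.character g = 0 := by
  have hp3 : 3 ≤ p := by
    obtain ⟨k, hk⟩ := hpodd
    have := hp.two_le
    omega
  -- notation
  set zz : DoubleCover.Cover n α := DoubleCover.z n α with hzz
  -- the reference element g₀
  set y : DoubleCover.Cover n α := DoubleCover.t n α ⟨p, by omega⟩ with hy
  set g₀ : DoubleCover.Cover n α :=
    (List.ofFn fun i : Fin (p-1) => DoubleCover.t n α (Fin.castLE (by omega) i)).prod
      * DoubleCover.t n α ⟨p, by omega⟩ * DoubleCover.t n α ⟨p+2, by omega⟩ with hg₀
  have hconj : y * g₀ * y⁻¹ = zz * g₀ :=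
    DoubleCover.conj_zg0 (by omega) hpodd hn
  -- the embedding of indices
  set f : ℕ → Fin n := fun m => ⟨min m (n-1), by omega⟩ with hf
  have hfval : ∀ m : ℕ, m ≤ p + 3 → (f m : ℕ) = m := by
    intro m hm
    simp only [hf]
    omega
  have hfinj : ∀ i j : ℕ, i ≤ p+3 → j ≤ p+3 → f i = f j → i = j := by
    intro i j hi hj hij
    have h5 : i ⊓ (n-1) = j ⊓ (n-1) := congrArg (fun x : Fin n => (x : ℕ)) hij
    omega
  -- compute π g₀
  have hπg₀ : π g₀ = ((List.ofFn fun i : Fin (p-1) =>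
        Equiv.swap (f i) (f (i+1))).prod
      * Equiv.swap (f p) (f (p+1))) * Equiv.swap (f (p+2)) (f (p+3)) := by
    have hswapgen : ∀ (j : Fin (n-1)), π (DoubleCover.t n α j)
        = Equiv.swap (f j) (f ((j : ℕ)+1)) := by
      intro j
      rw [hπt j]
      have hj := j.isLt
      congr 1 <;> apply Fin.ext <;> simp [hf] <;> omega
    have hlist : (List.ofFn fun i : Fin (p-1) =>
          DoubleCover.t n α (Fin.castLE (by omega) i)).map π
        = List.ofFn fun i : Fin (p-1) => Equiv.swap (f i) (f (i+1)) := by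
      rw [List.map_ofFn]
      refine congrArg List.ofFn (funext fun i => ?_)
      rw [Function.comp_apply]
      exact hswapgen _
    have hs1 : π (DoubleCover.t n α ⟨p, by omega⟩) = Equiv.swap (f p) (f (p+1)) :=
      hswapgen _
    have hs2 : π (DoubleCover.t n α ⟨p+2, by omega⟩)
        = Equiv.swap (f (p+2)) (f (p+3)) := hswapgen _
    rw [hg₀, map_mul, map_mul, map_list_prod, hlist, hs1, hs2]
  have hπg₀type : (π g₀).cycleType = {p, 2, 2} := by
    rw [hπg₀]
    refine cycleType_three hp3 hn f ?_
    intro i j hi hj hij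
    exact hfinj i j hi hj hij
  -- conjugacy between π g₀ and π g
  have hisconj : IsConj (π g₀) (π g) :=
    Equiv.Perm.isConj_iff_cycleType_eq.mpr (by rw [hπg₀type, hg])
  obtain ⟨c, hc⟩ := isConj_iff.mp hisconj
  obtain ⟨x, rfl⟩ := hπsurj c
  -- relate g to x g₀ x⁻¹ through the kernel
  have hker : x * g₀ * x⁻¹ * g⁻¹ ∈ π.ker := by
    rw [MonoidHom.mem_ker, map_mul, map_mul, map_mul, map_inv, map_inv, hc,
      mul_inv_cancel]
  rw [hπker, Subgroup.mem_zpowers_iff] at hker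
  obtain ⟨m, hm⟩ := hker
  have hgw : x * g₀ * x⁻¹ = zz ^ m * g := by
    have h6 := congrArg (· * g) hm
    simpa using h6.symm
  have hzcomm : ∀ a : DoubleCover.Cover n α, zz * a = a * zz :=
    fun a => DoubleCover.z_comm a
  have hζ : ∀ a : DoubleCover.Cover n α, (zz ^ m)⁻¹ * a = a * (zz ^ m)⁻¹ := by
    intro a
    have h1 : Commute zz a := hzcomm a
    exact ((h1.zpow_left m).inv_left).eq
  set u : DoubleCover.Cover n α := x * y * x⁻¹ with hu
  have huw : u * (x * g₀ * x⁻¹) * u⁻¹ = zz * (x * g₀ * x⁻¹) := by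
    have h2 : u * (x * g₀ * x⁻¹) * u⁻¹ = x * (y * g₀ * y⁻¹) * x⁻¹ := by
      rw [hu]; group
    rw [h2, hconj, show x * (zz * g₀) * x⁻¹ = (x * zz) * g₀ * x⁻¹ by group,
      ← hzcomm x]
    group
  have hug : u * g * u⁻¹ = zz * g := by
    have h3 : g = (zz ^ m)⁻¹ * (x * g₀ * x⁻¹) := by
      rw [hgw]; group
    calc u * g * u⁻¹ = u * ((zz ^ m)⁻¹ * (x * g₀ * x⁻¹)) * u⁻¹ := by rw [← h3]
      _ = (zz ^ m)⁻¹ * (u * (x * g₀ * x⁻¹) * u⁻¹) := by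
          rw [show u * ((zz ^ m)⁻¹ * (x * g₀ * x⁻¹)) = (u * (zz ^ m)⁻¹) * (x * g₀ * x⁻¹)
            by group, ← hζ u]
          group
      _ = (zz ^ m)⁻¹ * (zz * (x * g₀ * x⁻¹)) := by rw [huw]
      _ = zz * ((zz ^ m)⁻¹ * (x * g₀ * x⁻¹)) := by
          rw [show (zz ^ m)⁻¹ * (zz * (x * g₀ * x⁻¹)) = ((zz ^ m)⁻¹ * zz) * (x * g₀ * x⁻¹)
            by group, hζ zz]
          group
      _ = zz * g := by rw [← h3]
  -- character argument
  have hchar1 : V.character (u * g * u⁻¹) = V.character g := FDRep.char_conj V g u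
  have hchar2 : V.character (zz * g) = - V.character g :=
    char_z_smul zz hzcomm DoubleCover.z_mul_z V hV hfaith g
  have hfin : V.character g = - V.character g := by
    conv_lhs => rw [← hchar1, hug, hchar2]
  linear_combination hfin / 2
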